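/- (Proposition 2, part II.) The sequence φ converges to 0: lim_{j→∞} φ(j) = 0. -/
import Mathlib


open Filter

/-- Proposition 2, part II: `φ` converges to `0`. -/
theorem phi_tendsto_zero
    (lam lam_e : ℝ) (hlam0 : 0 < lam) (hlam1 : lam < 1)
    (hle0 : 0 < lam_e) (hle1 : lam_e < 1)
    (tbar : ℕ)
    (φ : ℕ → ℝ)
    (hφ0 : φ 0 = lam * lam_e / (lam * (tbar : ℝ) + 1))
    (hφ1 : ∀ j, j < tbar → φ (j + 1) = (1 - lam) * (1 - lam_e) * φ j)
    (hφ2 : ∀ j, tbar ≤ j → φ (j + 1) =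
      (1 - lam) * (1 - lam_e) * φ j + lam * (1 - lam_e) * φ (j - tbar)) :
    Tendsto φ atTop (nhds 0) := by
  set α : ℝ := (1 - lam) * (1 - lam_e) with hα
  set β : ℝ := lam * (1 - lam_e) with hβ
  set γ : ℝ := 1 - lam_e with hγ
  have hα0 : 0 ≤ α := by exact mul_nonneg (by linarith) (by linarith)
  have hβ0 : 0 ≤ β := by nlinarith
  have hγ0 : 0 < γ := by simp [hγ]; linarith
  have hγ1 : γ < 1 := by simp [hγ]; linarith
  have hαβ : α + β = γ := by ring
  have hA0 : 0 ≤ φ 0 := by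
    rw [hφ0]
    apply div_nonneg (by positivity)
    positivity
  set A : ℝ := φ 0 with hA
  -- base: 0 ≤ φ j ≤ A for all j
  have base : ∀ j, 0 ≤ φ j ∧ φ j ≤ A := by
    intro j
    induction j using Nat.strong_induction_on with
    | _ j ih =>
      match j with
      | 0 => exact ⟨hA0, le_refl _⟩
      | m + 1 =>
        obtain ⟨h1, h2⟩ := ih m (Nat.lt_succ_self m)
        by_cases hm : m < tbar
        · rw [hφ1 m hm]
          constructor
          · exact mul_nonneg hα0 h1
          · calc α * φ m ≤ 1 * A := by
                  apply mul_le_mul (by nlinarith) h2 h1 zero_le_one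
              _ = A := one_mul A
        · push_neg at hm
          obtain ⟨h3, h4⟩ := ih (m - tbar) (by omega)
          rw [hφ2 m hm]
          constructor
          · exact add_nonneg (mul_nonneg hα0 h1) (mul_nonneg hβ0 h3)
          · calc α * φ m + β * φ (m - tbar) ≤ α * A + β * A := by
                  gcongr
              _ = γ * A := by rw [← hαβ]; ring
              _ ≤ 1 * A := by gcongr
              _ = A := one_mul A
  -- main: φ j ≤ γ^k * A whenever k*(tbar+1) ≤ j
  have main : ∀ k j, k * (tbar + 1) ≤ j → φ j ≤ γ ^ k * A := by
    intro k
    induction k with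
    | zero => intro j _; simpa using (base j).2
    | succ k ih =>
      intro j hj
      have hrw : (k + 1) * (tbar + 1) = k * (tbar + 1) + (tbar + 1) := by ring
      rw [hrw] at hj
      set n := k * (tbar + 1) with hn
      have hj1 : 1 ≤ j := by omega
      have hmt : tbar ≤ j - 1 := by omega
      have e1 : (j - 1) + 1 = j := by omega
      have h2 := hφ2 (j - 1) hmt
      rw [e1] at h2
      have b1 : φ (j - 1) ≤ γ ^ k * A := ih _ (by omega)
      have b2 : φ (j - 1 - tbar) ≤ γ ^ k * A := ih _ (by omega)
      rw [h2]
      calc α * φ (j - 1) + β * φ (j - 1 - tbar)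
          ≤ α * (γ ^ k * A) + β * (γ ^ k * A) := by
            gcongr
        _ = γ ^ (k + 1) * A := by rw [← hαβ]; ring
  -- squeeze
  have hbound : ∀ j, φ j ≤ γ ^ (j / (tbar + 1)) * A := fun j =>
    main (j / (tbar + 1)) j (Nat.div_mul_le_self j (tbar + 1))
  have h1 : Tendsto (fun j : ℕ => j / (tbar + 1)) atTop atTop := by
    apply Filter.tendsto_atTop_atTop.2
    intro b
    exact ⟨b * (tbar + 1), fun a ha => (Nat.le_div_iff_mul_le (Nat.succ_pos tbar)).2 ha⟩
  have h2 : Tendsto (fun k : ℕ => γ ^ k) atTop (nhds 0) :=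
    tendsto_pow_atTop_nhds_zero_of_lt_one (le_of_lt hγ0) hγ1
  have hg : Tendsto (fun j : ℕ => γ ^ (j / (tbar + 1)) * A) atTop (nhds 0) := by
    have := (h2.comp h1).mul_const A
    simpa using this
  exact squeeze_zero (fun j => (base j).1) hbound hg
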